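/- There exist sequences of real random variables (X_n), (Y_n) satisfying AI-1 (merging of the joint law with the product of marginal laws) but not AI-2: specifically, with X, Y independent uniform on {0,1} and X_n = X + Y/n, Y_n = Y, one has E h(X_n,Y_n) − ∫ h d(P_{X_n} × P_{Y_n}) → 0 for every bounded uniformly continuous h : ℝ² → ℝ, while |P{X_n = 1, Y_n = 1} − P{X_n = 1}P{Y_n = 1}| → 1/8 ≠ 0. -/

import Mathlib

open MeasureTheory Filter

theorem stmt_19 {Ω : Type*} [MeasurableSpace Ω]
    (P : Measure Ω) [IsProbabilityMeasure P]
    (X Y : Ω → ℝ) (hX : Measurable X) (hY : Measurable Y)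
    (hindep : ProbabilityTheory.IndepFun X Y P)
    (hX0 : P {ω | X ω = 0} = 1 / 2) (hX1 : P {ω | X ω = 1} = 1 / 2)
    (hY0 : P {ω | Y ω = 0} = 1 / 2) (hY1 : P {ω | Y ω = 1} = 1 / 2) :
    -- AI-1 holds for X_n = X + Y/n, Y_n = Y
    (∀ h : ℝ × ℝ → ℝ,
      UniformContinuous h → (∃ C, ∀ z, |h z| ≤ C) →
      Tendsto (fun n : ℕ =>
          (∫ ω, h (X ω + Y ω / n, Y ω) ∂P)
            - ∫ z, h z ∂((P.map (fun ω => X ω + Y ω / n)).prod (P.map Y)))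
        atTop (nhds 0))
    -- but AI-2 fails: for A = B = {1} the difference tends to 1/8 ≠ 0
    ∧ Tendsto (fun n : ℕ =>
        |(P {ω | X ω + Y ω / n = 1 ∧ Y ω = 1}).toReal
          - (P {ω | X ω + Y ω / n = 1}).toReal * (P {ω | Y ω = 1}).toReal|)
      atTop (nhds (1 / 8))
    ∧ (1 / 8 : ℝ) ≠ 0 := by
  have hXn : ∀ n : ℕ, Measurable (fun ω => X ω + Y ω / (n : ℝ)) :=
    fun n => hX.add (hY.div_const _)
  refine ⟨?_, ?_, by norm_num⟩
  · -- AI-1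
    rintro h huc ⟨C, hC⟩
    have hcont : Continuous h := huc.continuous
    have hCnn : 0 ≤ C := le_trans (abs_nonneg _) (hC (0, 0))
    -- limit of each point
    have hlim : ∀ ω : Ω, Tendsto (fun n : ℕ => (X ω + Y ω / n, Y ω)) atTop
        (nhds (X ω, Y ω)) := by
      intro ω
      have h1 : Tendsto (fun n : ℕ => Y ω / (n : ℝ)) atTop (nhds 0) :=
        Tendsto.div_atTop tendsto_const_nhds tendsto_natCast_atTop_atTop
      have h2 : Tendsto (fun n : ℕ => X ω + Y ω / (n : ℝ)) atTop (nhds (X ω)) := by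
        simpa using tendsto_const_nhds.add h1
      exact h2.prodMk_nhds tendsto_const_nhds
    set L : ℝ := ∫ ω, h (X ω, Y ω) ∂P with hL
    have tA : Tendsto (fun n : ℕ => ∫ ω, h (X ω + Y ω / n, Y ω) ∂P) atTop (nhds L) := by
      refine tendsto_integral_of_dominated_convergence (fun _ => C)
        (fun n => (hcont.measurable.comp ((hXn n).prodMk hY)).aestronglyMeasurable)
        (integrable_const C) (fun n => ae_of_all _ fun ω => ?_)
        (ae_of_all _ fun ω => (hcont.tendsto _).comp (hlim ω))
      simpa [Real.norm_eq_abs] using hC _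
    have key : ∀ n : ℕ, ∫ z, h z ∂((P.map (fun ω => X ω + Y ω / n)).prod (P.map Y))
        = ∫ p : Ω × Ω, h (X p.1 + Y p.1 / n, Y p.2) ∂(P.prod P) := by
      intro n
      rw [Measure.map_prod_map _ _ (hXn n) hY,
        integral_map ((hXn n).prodMap hY).aemeasurable hcont.aestronglyMeasurable]
      rfl
    have keyL : ∫ p : Ω × Ω, h (X p.1, Y p.2) ∂(P.prod P) = L := by
      have hmap : P.map (fun ω => (X ω, Y ω)) = (P.map X).prod (P.map Y) :=
        (ProbabilityTheory.indepFun_iff_map_prod_eq_prod_map_map hX.aemeasurable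
          hY.aemeasurable).mp hindep
      have e1 : ∫ p : Ω × Ω, h (X p.1, Y p.2) ∂(P.prod P)
          = ∫ z, h z ∂((P.map X).prod (P.map Y)) := by
        rw [Measure.map_prod_map _ _ hX hY,
          integral_map (hX.prodMap hY).aemeasurable hcont.aestronglyMeasurable]
        rfl
      rw [e1, ← hmap, integral_map (hX.prodMk hY).aemeasurable hcont.aestronglyMeasurable]
    have tB : Tendsto (fun n : ℕ =>
        ∫ z, h z ∂((P.map (fun ω => X ω + Y ω / n)).prod (P.map Y))) atTop (nhds L) := by
      simp only [key]
      rw [← keyL]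
      refine tendsto_integral_of_dominated_convergence (fun _ => C)
        (fun n => (hcont.measurable.comp
          (((hXn n).comp measurable_fst).prodMk (hY.comp measurable_snd))).aestronglyMeasurable)
        (integrable_const C) (fun n => ae_of_all _ fun p => ?_)
        (ae_of_all _ fun p => ?_)
      · simpa [Real.norm_eq_abs] using hC _
      · have h1 : Tendsto (fun n : ℕ => Y p.1 / (n : ℝ)) atTop (nhds 0) :=
          Tendsto.div_atTop tendsto_const_nhds tendsto_natCast_atTop_atTop
        have h2 : Tendsto (fun n : ℕ => X p.1 + Y p.1 / (n : ℝ)) atTop (nhds (X p.1)) := by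
          simpa using tendsto_const_nhds.add h1
        exact (hcont.tendsto _).comp (h2.prodMk_nhds tendsto_const_nhds)
    simpa using tA.sub tB
  · -- AI-2 fails
    have hmX0 : MeasurableSet {ω | X ω = 0} := hX (measurableSet_singleton 0)
    have hmX1 : MeasurableSet {ω | X ω = 1} := hX (measurableSet_singleton 1)
    have hmY0 : MeasurableSet {ω | Y ω = 0} := hY (measurableSet_singleton 0)
    have hmY1 : MeasurableSet {ω | Y ω = 1} := hY (measurableSet_singleton 1)
    have hNX : P ({ω | X ω = 0} ∪ {ω | X ω = 1})ᶜ = 0 := by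
      have hdisj : Disjoint {ω | X ω = 0} {ω | X ω = 1} := by
        rw [Set.disjoint_left]
        intro ω h0 h1
        simp only [Set.mem_setOf_eq] at h0 h1
        norm_num [h0] at h1
      have hU : P ({ω | X ω = 0} ∪ {ω | X ω = 1}) = 1 := by
        rw [measure_union hdisj hmX1, hX0, hX1, one_div, ENNReal.inv_two_add_inv_two]
      rw [measure_compl (hmX0.union hmX1) (measure_ne_top _ _), hU, measure_univ]
      simp
    have hNY : P ({ω | Y ω = 0} ∪ {ω | Y ω = 1})ᶜ = 0 := by
      have hdisj : Disjoint {ω | Y ω = 0} {ω | Y ω = 1} := by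
        rw [Set.disjoint_left]
        intro ω h0 h1
        simp only [Set.mem_setOf_eq] at h0 h1
        norm_num [h0] at h1
      have hU : P ({ω | Y ω = 0} ∪ {ω | Y ω = 1}) = 1 := by
        rw [measure_union hdisj hmY1, hY0, hY1, one_div, ENNReal.inv_two_add_inv_two]
      rw [measure_compl (hmY0.union hmY1) (measure_ne_top _ _), hU, measure_univ]
      simp
    have hev : ∀ᶠ n : ℕ in atTop,
        |(P {ω | X ω + Y ω / n = 1 ∧ Y ω = 1}).toReal
          - (P {ω | X ω + Y ω / n = 1}).toReal * (P {ω | Y ω = 1}).toReal|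
        = 1 / 8 := by
      filter_upwards [eventually_ge_atTop 2] with n hn
      have hn' : (2 : ℝ) ≤ (n : ℝ) := by exact_mod_cast hn
      have hnpos : (0 : ℝ) < (n : ℝ) := by linarith
      have hinv_pos : (0 : ℝ) < 1 / (n : ℝ) := by positivity
      have hinv_le : (1 : ℝ) / (n : ℝ) ≤ 1 / 2 := by
        rw [div_le_div_iff₀ hnpos (by norm_num)]; linarith
      -- joint probability is 0
      have hA : P {ω | X ω + Y ω / n = 1 ∧ Y ω = 1} = 0 := by
        refine measure_mono_null ?_ hNX
        intro ω hω
        obtain ⟨h1, h2⟩ := hω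
        have hx : X ω = 1 - 1 / (n : ℝ) := by
          rw [h2] at h1; linarith
        simp only [Set.mem_compl_iff, Set.mem_union, Set.mem_setOf_eq, hx]
        push_neg
        constructor <;> intro hcon <;> linarith
      -- marginal probability is 1/4
      have hB : P {ω | X ω + Y ω / n = 1} = 1 / 4 := by
        have hT : P ({ω | X ω = 1} ∩ {ω | Y ω = 0}) = 1 / 4 := by
          have := hindep.measure_inter_preimage_eq_mul _ _ (measurableSet_singleton (1 : ℝ))
            (measurableSet_singleton (0 : ℝ))
          have e : X ⁻¹' {1} = {ω | X ω = 1} := rfl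
          have e' : Y ⁻¹' {0} = {ω | Y ω = 0} := rfl
          rw [e, e'] at this
          rw [this, hX1, hY0]
          simp only [one_div]
          rw [← ENNReal.mul_inv (Or.inl (by norm_num)) (Or.inl (by norm_num))]
          norm_num
        have hsub1 : {ω | X ω = 1} ∩ {ω | Y ω = 0} ⊆ {ω | X ω + Y ω / n = 1} := by
          rintro ω ⟨h1, h2⟩
          simp only [Set.mem_setOf_eq] at *
          rw [h1, h2]; simp
        have hsub2 : {ω | X ω + Y ω / n = 1} ⊆ ({ω | X ω = 1} ∩ {ω | Y ω = 0})
            ∪ (({ω | X ω = 0} ∪ {ω | X ω = 1})ᶜ ∪ ({ω | Y ω = 0} ∪ {ω | Y ω = 1})ᶜ) := by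
          intro ω hω
          simp only [Set.mem_setOf_eq] at hω
          by_cases hx : X ω = 0 ∨ X ω = 1
          · by_cases hy : Y ω = 0 ∨ Y ω = 1
            · left
              rcases hx with hx | hx <;> rcases hy with hy | hy
              · rw [hx, hy] at hω; norm_num at hω
              · rw [hx, hy] at hω
                rw [zero_add] at hω
                linarith [hω]
              · exact ⟨hx, hy⟩
              · rw [hx, hy] at hω; linarith [hω]
            · right; right; simpa using hy
          · right; left; simpa using hx
        refine le_antisymm ?_ ?_
        · calc P {ω | X ω + Y ω / n = 1}
              ≤ P (({ω | X ω = 1} ∩ {ω | Y ω = 0})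
                ∪ (({ω | X ω = 0} ∪ {ω | X ω = 1})ᶜ ∪ ({ω | Y ω = 0} ∪ {ω | Y ω = 1})ᶜ)) :=
                measure_mono hsub2
            _ ≤ P ({ω | X ω = 1} ∩ {ω | Y ω = 0})
                + P (({ω | X ω = 0} ∪ {ω | X ω = 1})ᶜ ∪ ({ω | Y ω = 0} ∪ {ω | Y ω = 1})ᶜ) :=
                measure_union_le _ _
            _ ≤ P ({ω | X ω = 1} ∩ {ω | Y ω = 0})
                + (P (({ω | X ω = 0} ∪ {ω | X ω = 1})ᶜ)
                  + P (({ω | Y ω = 0} ∪ {ω | Y ω = 1})ᶜ)) := by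
                gcongr; exact measure_union_le _ _
            _ = 1 / 4 := by rw [hT, hNX, hNY]; simp
        · rw [← hT]; exact measure_mono hsub1
      rw [hA, hB, hY1]
      simp only [ENNReal.toReal_zero]
      rw [ENNReal.toReal_div, ENNReal.toReal_div]
      norm_num
    exact Tendsto.congr' (hev.mono fun n hn => hn.symm) tendsto_const_nhds
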